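/- Let M/K be a finite extension of number fields, G a finite group, and suppose there is a G-crossed product K-division algebra D₀ such that D = D₀ ⊗_K M is also a G-crossed product division algebra (condition (9)). Then there exist a maximal subfield L₀ of D₀ which is a Galois G-extension of K with L₀ ∩ M = K, and L = L₀M is a maximal subfield of D (condition (5)). Conversely condition (5) implies condition (9). -/

import Mathlib

open scoped TensorProduct

/-- A Galois `G`-extension of `F`: a finite Galois field extension `L/F` together with
an identification `Gal(L/F) ≅ G`. -/
structure GalGExt (F : Type) [Field F] (G : Type) [Group G] : Type 1 where
  L : Type
  [fieldL : Field L]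
  [algL : Algebra F L]
  findim : FiniteDimensional F L
  galois : IsGalois F L
  galG : (L ≃ₐ[F] L) ≃* G

attribute [instance] GalGExt.fieldL GalGExt.algL

/-- `D` is a `G`-crossed product algebra over `F`: it has a (strictly) maximal subfield
which is a Galois `G`-extension of `F` (maximality expressed by `dim_F D = [L:F]²`). -/
def IsGCrossedProduct (F : Type) [Field F] (G : Type) [Group G]
    (D : Type) [Ring D] [Algebra F D] : Prop :=
  ∃ W : GalGExt F G, Nonempty (W.L →ₐ[F] D) ∧
    Module.finrank F D = Module.finrank F W.L * Module.finrank F W.L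

/-- If `L/K` embeds into `D₀` and `M ⊗[K] D₀` is a domain, then `M ⊗[K] L` is a field. -/
theorem aux_isField (K M L D₀ : Type) [Field K] [Field M] [Algebra K M]
    [Field L] [Algebra K L] [FiniteDimensional K L]
    [Ring D₀] [Algebra K D₀] [Nontrivial D₀]
    (hdom : IsDomain (M ⊗[K] D₀)) (f : L →ₐ[K] D₀) : IsField (M ⊗[K] L) := by
  haveI := hdom
  haveI : Module.Finite M (M ⊗[K] L) := Module.Finite.base_change K M L
  let g : M ⊗[K] L →ₐ[M] M ⊗[K] D₀ := Algebra.TensorProduct.map (AlgHom.id M M) f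
  have hcoe : ∀ x, g x = LinearMap.lTensor M f.toLinearMap x := by
    intro x
    induction x using TensorProduct.induction_on with
    | zero => simp
    | tmul m l => simp [g]
    | add x y hx hy => rw [map_add, map_add, hx, hy]
  have h1 : Function.Injective (LinearMap.lTensor M f.toLinearMap) :=
    Module.Flat.lTensor_preserves_injective_linearMap _ f.toRingHom.injective
  have hinj : Function.Injective g := by
    intro a b hab
    apply h1
    rw [← hcoe, ← hcoe, hab]
  haveI hdom2 : IsDomain (M ⊗[K] L) := Function.Injective.isDomain g.toRingHom hinj
  haveI hint : Algebra.IsIntegral M (M ⊗[K] L) := Algebra.IsIntegral.of_finite _ _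
  exact (Algebra.IsIntegral.isField_iff_isField
    (algebraMap M (M ⊗[K] L)).injective).mp (Field.toIsField M)

/-- If `W` is a Galois `G`-extension of `K` such that `M ⊗[K] W.L` is a field which embeds
maximally into `D`, then `D` is a `G`-crossed product over `M`. -/
theorem aux_cp (K M G : Type) [Field K] [Field M] [Algebra K M] [Group G]
    (D : Type) [Ring D] [Algebra M D]
    (W : GalGExt K G) (hfield : IsField (M ⊗[K] W.L))
    (g : (M ⊗[K] W.L) →ₐ[M] D)
    (hrank : Module.finrank M D =
      Module.finrank M (M ⊗[K] W.L) * Module.finrank M (M ⊗[K] W.L)) :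
    IsGCrossedProduct M G D := by
  haveI := W.findim
  haveI := W.galois
  letI instF : Field (M ⊗[K] W.L) := hfield.toField
  haveI : FiniteDimensional M (M ⊗[K] W.L) := Module.Finite.base_change K M W.L
  letI : Algebra W.L (M ⊗[K] W.L) :=
    (Algebra.TensorProduct.includeRight (R := K) (A := M) (B := W.L)).toRingHom.toAlgebra
  have halg : ∀ l : W.L, algebraMap W.L (M ⊗[K] W.L) l = (1 : M) ⊗ₜ[K] l := fun l => rfl
  haveI : IsScalarTower K W.L (M ⊗[K] W.L) := IsScalarTower.of_algebraMap_eq fun r => by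
    rw [halg, Algebra.TensorProduct.algebraMap_apply, Algebra.algebraMap_eq_smul_one,
      Algebra.algebraMap_eq_smul_one (A := W.L), TensorProduct.smul_tmul]
  -- the restriction map from Aut_M(M ⊗ L) to Gal(L/K)
  let ρ : ((M ⊗[K] W.L) ≃ₐ[M] (M ⊗[K] W.L)) → (W.L ≃ₐ[K] W.L) :=
    fun σ => AlgEquiv.restrictNormalHom W.L (σ.restrictScalars K)
  have key : ∀ (σ : (M ⊗[K] W.L) ≃ₐ[M] (M ⊗[K] W.L)) (l : W.L),
      σ ((1 : M) ⊗ₜ[K] l) = (1 : M) ⊗ₜ[K] (ρ σ l) := by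
    intro σ l
    have h := AlgEquiv.restrictNormal_commutes (σ.restrictScalars K) W.L l
    rw [halg, halg] at h
    exact h.symm
  have hρinj : Function.Injective ρ := by
    intro σ τ h
    apply AlgEquiv.ext
    intro x
    induction x using TensorProduct.induction_on with
    | zero => rw [map_zero, map_zero]
    | add x y hx hy => rw [map_add, map_add, hx, hy]
    | tmul m l =>
        have hm : (m ⊗ₜ[K] l : M ⊗[K] W.L) = algebraMap M (M ⊗[K] W.L) m * ((1 : M) ⊗ₜ[K] l) := by
          rw [Algebra.TensorProduct.algebraMap_apply, Algebra.TensorProduct.tmul_mul_tmul,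
            one_mul, mul_one, Algebra.algebraMap_self_apply]
        rw [hm, map_mul, map_mul, AlgEquiv.commutes, AlgEquiv.commutes, key σ, key τ, h]
  -- the extension map from Gal(L/K) to Aut_M(M ⊗ L)
  let j : (W.L ≃ₐ[K] W.L) → ((M ⊗[K] W.L) ≃ₐ[M] (M ⊗[K] W.L)) :=
    fun σ => Algebra.TensorProduct.congr AlgEquiv.refl σ
  have hj : ∀ (σ : W.L ≃ₐ[K] W.L) (m : M) (l : W.L), j σ (m ⊗ₜ[K] l) = m ⊗ₜ[K] σ l := by
    intro σ m l
    simp [j, Algebra.TensorProduct.congr_apply]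
  have hjinj : Function.Injective j := by
    intro σ τ h
    apply AlgEquiv.ext
    intro l
    apply (algebraMap W.L (M ⊗[K] W.L)).injective
    rw [halg, halg, ← hj σ, ← hj τ, h]
  have hjmul : ∀ σ τ : W.L ≃ₐ[K] W.L, j (σ * τ) = j σ * j τ := by
    intro σ τ
    apply AlgEquiv.ext
    intro x
    induction x using TensorProduct.induction_on with
    | zero => rw [map_zero, AlgEquiv.mul_apply, map_zero, map_zero]
    | add x y hx hy => rw [map_add, hx, hy, AlgEquiv.mul_apply, AlgEquiv.mul_apply,
        AlgEquiv.mul_apply, map_add, map_add]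
    | tmul m l => rw [hj, AlgEquiv.mul_apply (j σ) (j τ), hj τ, hj σ, AlgEquiv.mul_apply]
  let J : (W.L ≃ₐ[K] W.L) →* ((M ⊗[K] W.L) ≃ₐ[M] (M ⊗[K] W.L)) := MonoidHom.mk' j hjmul
  have h1 : Fintype.card ((M ⊗[K] W.L) ≃ₐ[M] (M ⊗[K] W.L)) ≤ Fintype.card (W.L ≃ₐ[K] W.L) :=
    Fintype.card_le_of_injective ρ hρinj
  have h2 : Fintype.card (W.L ≃ₐ[K] W.L) ≤ Fintype.card ((M ⊗[K] W.L) ≃ₐ[M] (M ⊗[K] W.L)) :=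
    Fintype.card_le_of_injective j hjinj
  have hcard : Fintype.card ((M ⊗[K] W.L) ≃ₐ[M] (M ⊗[K] W.L)) = Fintype.card (W.L ≃ₐ[K] W.L) :=
    le_antisymm h1 h2
  have hfr : Module.finrank M (M ⊗[K] W.L) = Module.finrank K W.L := Module.finrank_baseChange
  have hgal : IsGalois M (M ⊗[K] W.L) := IsGalois.of_card_aut_eq_finrank M (M ⊗[K] W.L)
    (by rw [Nat.card_eq_fintype_card, hcard, ← Nat.card_eq_fintype_card, IsGalois.card_aut_eq_finrank, hfr])
  have hbij : Function.Bijective J :=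
    (Fintype.bijective_iff_injective_and_card J).mpr ⟨hjinj, hcard.symm⟩
  exact ⟨{ L := M ⊗[K] W.L, findim := ‹_›, galois := hgal,
           galG := (MulEquiv.ofBijective J hbij).symm.trans W.galG }, ⟨g⟩, hrank⟩

theorem stmt_17 (K M G D₀ : Type) [Field K] [NumberField K] [Field M] [NumberField M]
    [Algebra K M] [FiniteDimensional K M] [Group G] [Finite G]
    [DivisionRing D₀] [Algebra K D₀] [FiniteDimensional K D₀]
    (hcentral : Subalgebra.center K D₀ = ⊥)
    (hcp : IsGCrossedProduct K G D₀) :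
    (IsDomain (M ⊗[K] D₀) ∧ IsGCrossedProduct M G (M ⊗[K] D₀)) ↔
      (IsDomain (M ⊗[K] D₀) ∧
        ∃ W : GalGExt K G,
          Nonempty (W.L →ₐ[K] D₀) ∧
          Module.finrank K D₀ = Module.finrank K W.L * Module.finrank K W.L ∧
          IsField (M ⊗[K] W.L) ∧
          Nonempty ((M ⊗[K] W.L) →ₐ[M] (M ⊗[K] D₀)) ∧
          Module.finrank M (M ⊗[K] D₀) =
            Module.finrank M (M ⊗[K] W.L) * Module.finrank M (M ⊗[K] W.L)) := by
  constructor
  · rintro ⟨hdom, -⟩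
    obtain ⟨W, ⟨f⟩, hr⟩ := hcp
    haveI := W.findim
    refine ⟨hdom, W, ⟨f⟩, hr, aux_isField K M W.L D₀ hdom f,
      ⟨Algebra.TensorProduct.map (AlgHom.id M M) f⟩, ?_⟩
    rw [Module.finrank_baseChange, Module.finrank_baseChange, hr]
  · rintro ⟨hdom, W, ⟨f⟩, hr, hfield, ⟨g⟩, hrank⟩
    exact ⟨hdom, aux_cp K M G (M ⊗[K] D₀) W hfield g hrank⟩
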